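/- The key poset relation ⪯ on weak compositions of length n is a partial order (reflexive, antisymmetric, transitive). -/
import Mathlib


/-- The key poset order on weak compositions of length `n` (functions `Fin n → ℕ`):
`a ⪯ b` iff `a i ≤ b i` for all `i`, and for all `i < j`, if `b j > a j` and
`a i > a j` then `b i > b j`. -/
def KeyLE {n : ℕ} (a b : Fin n → ℕ) : Prop :=
  (∀ i, a i ≤ b i) ∧ ∀ i j : Fin n, i < j → a j < b j → a j < a i → b j < b i

/-- Strict key order. -/
def KeyLT {n : ℕ} (a b : Fin n → ℕ) : Prop := KeyLE a b ∧ a ≠ b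

/-- Cover relation in the key poset. -/
def KeyCovers {n : ℕ} (a b : Fin n → ℕ) : Prop :=
  KeyLT a b ∧ ¬ ∃ c : Fin n → ℕ, KeyLT a c ∧ KeyLT c b

/-- The rank of a weak composition: the sum of its parts. -/
def rk {n : ℕ} (a : Fin n → ℕ) : ℕ := ∑ i, a i

/-- The key poset relation is a partial order: reflexive, antisymmetric,
and transitive. -/
theorem keyLE_partialOrder {n : ℕ} :
    (∀ a : Fin n → ℕ, KeyLE a a) ∧
    (∀ a b : Fin n → ℕ, KeyLE a b → KeyLE b a → a = b) ∧
    (∀ a b c : Fin n → ℕ, KeyLE a b → KeyLE b c → KeyLE a c) := by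
  refine ⟨fun a => ⟨fun i => le_rfl, fun i j _ _ h2 => h2⟩, ?_, ?_⟩
  · intro a b hab hba
    funext i
    exact le_antisymm (hab.1 i) (hba.1 i)
  · rintro a b c ⟨hab1, hab2⟩ ⟨hbc1, hbc2⟩
    refine ⟨fun i => (hab1 i).trans (hbc1 i), fun i j hij hj hji => ?_⟩
    rcases lt_or_eq_of_le (hab1 j) with h | h
    · have hbij : b j < b i := hab2 i j hij h hji
      rcases lt_or_eq_of_le (hbc1 j) with h2 | h2
      · exact hbc2 i j hij h2 hbij
      · exact h2 ▸ lt_of_lt_of_le hbij (hbc1 i)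
    · have h2 : b j < c j := h ▸ hj
      have hbij : b j < b i := h ▸ lt_of_lt_of_le hji (hab1 i)
      exact hbc2 i j hij h2 hbij
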